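/- Supermodularity for homogeneous forms: let f(x) = ⟨F, x^{⊗d}⟩ be a degree-d form with coefficient tensor F such that for all 2 ≤ k ≤ d every k-dimensional subtensor of F lies in the dual Graver cone P_k*(A) (i.e., has nonnegative inner product with g^1 ⊗ ⋯ ⊗ g^k for all g^i ∈ G(A) pairwise in the same orthant and not all equal). Then for every nonnegative x ∈ ℝ_+^n, distinct g^1, …, g^t ∈ G(A) pairwise in the same orthant, and μ_r ≥ 0: f(x + Σ_r μ_r g^r) − f(x) ≥ Σ_r (f(x + μ_r g^r) − f(x)). -/

import Mathlib

open Matrix BigOperators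

/-- The conformal order on `ℤ^n`. -/
def ConformalLE {n : ℕ} (x y : Fin n → ℤ) : Prop :=
  ∀ i, 0 ≤ x i * y i ∧ |x i| ≤ |y i|

/-- The Graver basis of an integer matrix `A`: the `⊑`-minimal elements of
`{x ∈ ℤ^n : Ax = 0, x ≠ 0}`. -/
def graverBasis {m n : ℕ} (A : Matrix (Fin m) (Fin n) ℤ) : Set (Fin n → ℤ) :=
  {g | g ≠ 0 ∧ A.mulVec g = 0 ∧
    ∀ y : Fin n → ℤ, y ≠ 0 → A.mulVec y = 0 → ConformalLE y g → y = g}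

/-- Cast an integer vector to a real vector. -/
def castVec {n : ℕ} (g : Fin n → ℤ) : Fin n → ℝ := fun i => (g i : ℝ)


/-- A degree-`d` homogeneous form `⟨F, x^{⊗d}⟩` given by a coefficient tensor
`F`, modelled as a function on multi-indices. -/
def tensorForm {n d : ℕ} (F : (Fin d → Fin n) → ℝ) (x : Fin n → ℝ) : ℝ :=
  ∑ idx : Fin d → Fin n, F idx * ∏ p, x (idx p)

/-- The `k`-dimensional subtensor of `F` obtained by letting the indices in
the image of `ι` vary and fixing the remaining indices according to `σ`. -/
noncomputable def subtensor {n d k : ℕ} (F : (Fin d → Fin n) → ℝ) (ι : Fin k ↪ Fin d)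
    (σ : Fin d → Fin n) : (Fin k → Fin n) → ℝ :=
  fun j => F (fun p => if h : ∃ q, ι q = p then j h.choose else σ p)

/-- Membership in the dual Graver cone `P_k*(A)`: nonnegative inner product
with `g¹ ⊗ ⋯ ⊗ g^k` for all Graver basis elements pairwise in the same
orthant and not all equal. -/
def memDualGraverConeDeg {m n : ℕ} (A : Matrix (Fin m) (Fin n) ℤ) (k : ℕ)
    (T : (Fin k → Fin n) → ℝ) : Prop :=
  ∀ g : Fin k → (Fin n → ℤ), (∀ p, g p ∈ graverBasis A) →
    (∀ p q i, 0 ≤ g p i * g q i) → (∃ p q, g p ≠ g q) →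
    0 ≤ ∑ j : Fin k → Fin n, T j * ∏ p, ((g p (j p) : ℝ))

noncomputable def Tterm {n d t : ℕ} (F : (Fin d → Fin n) → ℝ) (x : Fin n → ℝ)
    (μ : Fin t → ℝ) (g : Fin t → Fin n → ℤ) (ρ : Fin d → Option (Fin t)) : ℝ :=
  ∑ idx : Fin d → Fin n, F idx * ∏ p, (ρ p).elim (x (idx p)) (fun r => μ r * (g r (idx p) : ℝ))

lemma Tterm_nonneg {m n d t : ℕ} (A : Matrix (Fin m) (Fin n) ℤ)
    (F : (Fin d → Fin n) → ℝ)
    (hF : ∀ k, 2 ≤ k → k ≤ d → ∀ (ι : Fin k ↪ Fin d) (σ : Fin d → Fin n),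
      memDualGraverConeDeg A k (subtensor F ι σ))
    (x : Fin n → ℝ) (hx : ∀ i, 0 ≤ x i)
    (g : Fin t → (Fin n → ℤ))
    (hg : ∀ r, g r ∈ graverBasis A) (hdist : Function.Injective g)
    (horth : ∀ r s, ∀ i, 0 ≤ g r i * g s i)
    (μ : Fin t → ℝ) (hμ : ∀ r, 0 ≤ μ r)
    (ρ : Fin d → Option (Fin t)) (p₁ p₂ : Fin d) (r₁ r₂ : Fin t)
    (h1 : ρ p₁ = some r₁) (h2 : ρ p₂ = some r₂) (hr : r₁ ≠ r₂) :
    0 ≤ Tterm F x μ g ρ := by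
  classical
  -- n = 0 case
  rcases Nat.eq_zero_or_pos n with hn | hn
  · subst hn
    have : IsEmpty (Fin d → Fin 0) := by
      refine ⟨fun f => (f p₁).elim0⟩
    unfold Tterm
    rw [Finset.univ_eq_empty, Finset.sum_empty]
  haveI : NeZero n := ⟨hn.ne'⟩
  set S : Finset (Fin d) := Finset.univ.filter (fun p => (ρ p).isSome) with hS
  set k := S.card with hk
  have hp₁S : p₁ ∈ S := by simp [hS, h1]
  have hp₂S : p₂ ∈ S := by simp [hS, h2]
  have hpne : p₁ ≠ p₂ := by
    intro h; rw [h, h2] at h1; exact hr (Option.some.inj h1).symm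
  have hk2 : 2 ≤ k := by
    rw [hk]
    have := Finset.one_lt_card.mpr ⟨p₁, hp₁S, p₂, hp₂S, hpne⟩
    omega
  have hkd : k ≤ d := by
    calc k ≤ Fintype.card (Fin d) := Finset.card_le_univ S
    _ = d := Fintype.card_fin d
  set ι : Fin k ↪ Fin d := (S.orderEmbOfFin rfl).toEmbedding with hι
  have hmem : ∀ q, ι q ∈ S := fun q => S.orderEmbOfFin_mem rfl q
  have hrange : ∀ p ∈ S, ∃ q, ι q = p := by
    intro p hp
    have : (p : Fin d) ∈ Set.range (S.orderEmbOfFin rfl) := by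
      rw [Finset.range_orderEmbOfFin]; exact hp
    exact this
  have hsome : ∀ p ∈ S, (ρ p).isSome := by intro p hp; simpa [hS] using hp
  set rr : Fin k → Fin t := fun q => ((ρ (ι q)).get (hsome _ (hmem q))) with hrr
  have hρι : ∀ q, ρ (ι q) = some (rr q) := fun q => (Option.some_get _).symm
  set mg : (Fin k → Fin n) → ({p : Fin d // p ∉ S} → Fin n) → (Fin d → Fin n) :=
    fun j τ p => if h : ∃ q, ι q = p then j h.choose
      else τ ⟨p, fun hp => h (hrange p hp)⟩ with hmg
  have hmgι : ∀ j τ q, mg j τ (ι q) = j q := by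
    intro j τ q
    have hex : ∃ q', ι q' = ι q := ⟨q, rfl⟩
    have h1 : mg j τ (ι q) = j hex.choose := dif_pos hex
    rw [h1]
    congr 1
    exact ι.injective hex.choose_spec
  have hmgτ : ∀ j τ p (hp : p ∉ S), mg j τ p = τ ⟨p, hp⟩ := by
    intro j τ p hp
    have hnex : ¬ ∃ q, ι q = p := by rintro ⟨q, rfl⟩; exact hp (hmem q)
    exact dif_neg hnex
  set e : ((Fin k → Fin n) × ({p : Fin d // p ∉ S} → Fin n)) ≃ (Fin d → Fin n) :=
    { toFun := fun z => mg z.1 z.2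
      invFun := fun idx => (fun q => idx (ι q), fun p => idx p.1)
      left_inv := by
        rintro ⟨j, τ⟩
        refine Prod.ext ?_ ?_
        · funext q; exact hmgι j τ q
        · funext p
          show mg j τ p.1 = τ p
          rw [hmgτ j τ p.1 p.2]
      right_inv := by
        intro idx
        funext p
        by_cases hp : p ∈ S
        · obtain ⟨q, rfl⟩ := hrange p hp
          exact hmgι _ _ q
        · exact hmgτ _ _ p hp } with he
  have hsum : Tterm F x μ g ρ =
      ∑ τ : {p : Fin d // p ∉ S} → Fin n, ∑ j : Fin k → Fin n,
        F (mg j τ) * ∏ p, (ρ p).elim (x ((mg j τ) p))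
          (fun r => μ r * (g r ((mg j τ) p) : ℝ)) := by
    unfold Tterm
    rw [← Equiv.sum_comp e (fun idx => F idx * ∏ p, (ρ p).elim (x (idx p))
      (fun r => μ r * (g r (idx p) : ℝ)))]
    rw [Fintype.sum_prod_type_right]
    rfl
  rw [hsum]
  apply Finset.sum_nonneg
  intro τ _
  set σ : Fin d → Fin n := fun p => if h : p ∈ S then default else τ ⟨p, h⟩ with hσ
  have hστ : ∀ p (hp : p ∉ S), σ p = τ ⟨p, hp⟩ := by
    intro p hp; simp only [hσ, dif_neg hp]
  have hFsub : ∀ j, F (mg j τ) = subtensor F ι σ j := by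
    intro j
    unfold subtensor
    congr 1
    funext p
    by_cases hex : ∃ q, ι q = p
    · simp only [hmg, dif_pos hex]
    · have hp : p ∉ S := fun hp => hex (hrange p hp)
      simp only [hmg, dif_neg hex]
      rw [hστ p hp]
  have hmap : Finset.univ.map ι = S := by
    apply Finset.eq_of_subset_of_card_le
    · intro p hp
      obtain ⟨q, _, rfl⟩ := Finset.mem_map.mp hp
      exact hmem q
    · rw [Finset.card_map, Finset.card_univ, Fintype.card_fin]
  have hρnone : ∀ p ∉ S, ρ p = none := by
    intro p hp
    rcases Option.isSome_iff_exists.not.mp (by simpa [hS] using hp) with h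
    push_neg at h
    cases hval : ρ p with
    | none => rfl
    | some r => exact absurd hval (h r)
  have hprod : ∀ j : Fin k → Fin n,
      (∏ p, (ρ p).elim (x ((mg j τ) p)) (fun r => μ r * (g r ((mg j τ) p) : ℝ))) =
      ((∏ q, μ (rr q)) * ∏ p ∈ Sᶜ, x (σ p)) * ∏ q, ((g (rr q) (j q) : ℝ)) := by
    intro j
    rw [← Finset.prod_mul_prod_compl S]
    have hA : (∏ p ∈ S, (ρ p).elim (x ((mg j τ) p)) (fun r => μ r * (g r ((mg j τ) p) : ℝ)))
        = (∏ q, μ (rr q)) * ∏ q, ((g (rr q) (j q) : ℝ)) := by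
      rw [← hmap, Finset.prod_map]
      rw [← Finset.prod_mul_distrib]
      apply Finset.prod_congr rfl
      intro q _
      show (ρ (ι q)).elim (x ((mg j τ) (ι q))) (fun r => μ r * (g r ((mg j τ) (ι q)) : ℝ)) = _
      rw [hρι q, hmgι j τ q]
      rfl
    have hB : (∏ p ∈ Sᶜ, (ρ p).elim (x ((mg j τ) p)) (fun r => μ r * (g r ((mg j τ) p) : ℝ)))
        = ∏ p ∈ Sᶜ, x (σ p) := by
      apply Finset.prod_congr rfl
      intro p hp
      have hp' : p ∉ S := Finset.mem_compl.mp hp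
      rw [hρnone p hp', hmgτ j τ p hp', hστ p hp']
      rfl
    rw [hA, hB]
    ring
  have hfinal : ∑ j : Fin k → Fin n,
      F (mg j τ) * ∏ p, (ρ p).elim (x ((mg j τ) p)) (fun r => μ r * (g r ((mg j τ) p) : ℝ))
      = ((∏ q, μ (rr q)) * ∏ p ∈ Sᶜ, x (σ p)) *
        ∑ j : Fin k → Fin n, subtensor F ι σ j * ∏ q, ((g (rr q) (j q) : ℝ)) := by
    rw [Finset.mul_sum]
    apply Finset.sum_congr rfl
    intro j _
    rw [hFsub j, hprod j]
    ring
  rw [hfinal]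
  apply mul_nonneg
  · apply mul_nonneg
    · exact Finset.prod_nonneg fun q _ => hμ (rr q)
    · exact Finset.prod_nonneg fun p _ => hx (σ p)
  · obtain ⟨q₁, hq₁⟩ := hrange p₁ hp₁S
    obtain ⟨q₂, hq₂⟩ := hrange p₂ hp₂S
    have hrr₁ : rr q₁ = r₁ := by
      have := hρι q₁; rw [hq₁, h1] at this; exact (Option.some.inj this).symm
    have hrr₂ : rr q₂ = r₂ := by
      have := hρι q₂; rw [hq₂, h2] at this; exact (Option.some.inj this).symm
    have hne : ∃ a b : Fin k, (fun q => g (rr q)) a ≠ (fun q => g (rr q)) b := by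
      refine ⟨q₁, q₂, ?_⟩
      show g (rr q₁) ≠ g (rr q₂)
      rw [hrr₁, hrr₂]
      intro hcon
      exact hr (hdist hcon)
    exact hF k hk2 hkd ι σ (fun q => g (rr q)) (fun q => hg (rr q))
      (fun p q i => horth (rr p) (rr q) i) hne

lemma expand_sum {n d t : ℕ} (F : (Fin d → Fin n) → ℝ) (x : Fin n → ℝ)
    (v : Fin t → Fin n → ℝ) :
    tensorForm F (fun i => x i + ∑ r, v r i) =
      ∑ ρ : Fin d → Option (Fin t), ∑ idx : Fin d → Fin n,
        F idx * ∏ p, (ρ p).elim (x (idx p)) (fun r => v r (idx p)) := by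
  rw [Finset.sum_comm]
  unfold tensorForm
  congr 1
  funext idx
  rw [← Finset.mul_sum]
  congr 1
  have h1 : ∀ p : Fin d, x (idx p) + ∑ r, v r (idx p) =
      ∑ c : Option (Fin t), (c).elim (x (idx p)) (fun r => v r (idx p)) := by
    intro p
    rw [Fintype.sum_option]; rfl
  calc ∏ p : Fin d, (x (idx p) + ∑ r, v r (idx p))
      = ∏ p : Fin d, ∑ c : Option (Fin t), (c).elim (x (idx p)) (fun r => v r (idx p)) := by
        exact Finset.prod_congr rfl fun p _ => h1 p
    _ = ∑ ρ : Fin d → Option (Fin t), ∏ p, (ρ p).elim (x (idx p)) (fun r => v r (idx p)) := by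
        rw [Finset.prod_univ_sum]
        rw [Fintype.piFinset_univ]

/-- Supermodularity of degree-`d` forms all of whose `k`-dimensional
subtensors (`2 ≤ k ≤ d`) lie in the dual Graver cone `P_k*(A)`. -/
theorem form_supermodular {m n d : ℕ} (A : Matrix (Fin m) (Fin n) ℤ)
    (F : (Fin d → Fin n) → ℝ)
    (hF : ∀ k, 2 ≤ k → k ≤ d → ∀ (ι : Fin k ↪ Fin d) (σ : Fin d → Fin n),
      memDualGraverConeDeg A k (subtensor F ι σ))
    (x : Fin n → ℝ) (hx : ∀ i, 0 ≤ x i)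
    (t : ℕ) (g : Fin t → (Fin n → ℤ))
    (hg : ∀ r, g r ∈ graverBasis A) (hdist : Function.Injective g)
    (horth : ∀ r s, ∀ i, 0 ≤ g r i * g s i)
    (μ : Fin t → ℝ) (hμ : ∀ r, 0 ≤ μ r) :
    ∑ r, (tensorForm F (x + μ r • castVec (g r)) - tensorForm F x) ≤
      tensorForm F (x + ∑ r, μ r • castVec (g r)) - tensorForm F x := by
  classical
  set T : (Fin d → Option (Fin t)) → ℝ := Tterm F x μ g with hT
  have ha : tensorForm F (x + ∑ r, μ r • castVec (g r)) = ∑ ρ, T ρ := by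
    have harg : (x + ∑ r, μ r • castVec (g r)) =
        fun i => x i + ∑ r, (fun r i => μ r * (g r i : ℝ)) r i := by
      funext i
      simp [castVec]
    rw [harg, expand_sum]
    rfl
  have hb : tensorForm F x = T (fun _ => none) := by
    unfold tensorForm
    rw [hT]
    unfold Tterm
    rfl
  set As : Fin t → Finset (Fin d → Option (Fin t)) := fun s =>
    Finset.univ.filter (fun ρ => ∀ p, ρ p = none ∨ ρ p = some s) with hAs
  have hc : ∀ s, tensorForm F (x + μ s • castVec (g s)) = ∑ ρ ∈ As s, T ρ := by
    intro s
    have harg : (x + μ s • castVec (g s)) =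
        fun i => x i + ∑ r, (fun r i => if r = s then μ s * (g s i : ℝ) else 0) r i := by
      funext i
      simp [castVec, Finset.sum_ite_eq']
    rw [harg, expand_sum]
    rw [← Finset.sum_filter_add_sum_filter_not Finset.univ
      (fun ρ : Fin d → Option (Fin t) => ∀ p, ρ p = none ∨ ρ p = some s)]
    have hzero : ∑ ρ ∈ Finset.univ.filter
        (fun ρ : Fin d → Option (Fin t) => ¬ ∀ p, ρ p = none ∨ ρ p = some s),
        ∑ idx : Fin d → Fin n, F idx * ∏ p, (ρ p).elim (x (idx p))
          (fun r => if r = s then μ s * (g s (idx p) : ℝ) else 0) = 0 := by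
      apply Finset.sum_eq_zero
      intro ρ hρ
      rw [Finset.mem_filter] at hρ
      push_neg at hρ
      obtain ⟨p₀, hp₀, hp₀'⟩ := hρ.2
      obtain ⟨r₀, hr₀⟩ := Option.ne_none_iff_exists'.mp hp₀
      apply Finset.sum_eq_zero
      intro idx _
      have : (∏ p, (ρ p).elim (x (idx p))
          (fun r => if r = s then μ s * (g s (idx p) : ℝ) else 0)) = 0 := by
        apply Finset.prod_eq_zero (Finset.mem_univ p₀)
        rw [hr₀]
        have hrs : r₀ ≠ s := by
          intro h; rw [h] at hr₀; exact hp₀' hr₀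
        simp [hrs]
      rw [this, mul_zero]
    rw [hzero, add_zero]
    apply Finset.sum_congr rfl
    intro ρ hρ
    rw [Finset.mem_filter] at hρ
    rw [hT]
    unfold Tterm
    apply Finset.sum_congr rfl
    intro idx _
    congr 1
    apply Finset.prod_congr rfl
    intro p _
    rcases hρ.2 p with h | h <;> rw [h] <;> simp
  set cnone : Fin d → Option (Fin t) := fun _ => none with hcnone
  have hmemcnone : ∀ s, cnone ∈ As s := by
    intro s
    rw [hAs, Finset.mem_filter]
    exact ⟨Finset.mem_univ _, fun p => Or.inl rfl⟩
  set D : Fin t → Finset (Fin d → Option (Fin t)) := fun s => (As s).erase cnone with hD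
  have hsplit : ∀ s, ∑ ρ ∈ As s, T ρ = T cnone + ∑ ρ ∈ D s, T ρ := by
    intro s
    exact (Finset.add_sum_erase _ T (hmemcnone s)).symm
  have hLHS : ∑ r, (tensorForm F (x + μ r • castVec (g r)) - tensorForm F x) =
      ∑ s, ∑ ρ ∈ D s, T ρ := by
    apply Finset.sum_congr rfl
    intro s _
    rw [hc s, hsplit s, hb]
    ring
  have hdisj : ((Finset.univ : Finset (Fin t)) : Set (Fin t)).PairwiseDisjoint D := by
    intro s₁ _ s₂ _ hne
    show Disjoint (D s₁) (D s₂)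
    rw [Finset.disjoint_left]
    intro ρ hρ₁ hρ₂
    rw [hD] at hρ₁ hρ₂
    obtain ⟨hne₁, hmem₁⟩ := Finset.mem_erase.mp hρ₁
    obtain ⟨_, hmem₂⟩ := Finset.mem_erase.mp hρ₂
    obtain ⟨p₀, hp₀⟩ := Function.ne_iff.mp hne₁
    obtain ⟨r₀, hr₀⟩ := Option.ne_none_iff_exists'.mp hp₀
    have e₁ : r₀ = s₁ := by
      rcases (Finset.mem_filter.mp hmem₁).2 p₀ with h | h
      · exact absurd h hp₀
      · rw [hr₀] at h; exact Option.some.inj h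
    have e₂ : r₀ = s₂ := by
      rcases (Finset.mem_filter.mp hmem₂).2 p₀ with h | h
      · exact absurd h hp₀
      · rw [hr₀] at h; exact Option.some.inj h
    exact hne (e₁ ▸ e₂)
  have hsumB : ∑ s, ∑ ρ ∈ D s, T ρ = ∑ ρ ∈ Finset.univ.biUnion D, T ρ :=
    (Finset.sum_biUnion hdisj).symm
  have hsub : Finset.univ.biUnion D ⊆ Finset.univ.erase cnone := by
    intro ρ hρ
    rw [Finset.mem_biUnion] at hρ
    obtain ⟨s, _, hρ⟩ := hρ
    exact Finset.mem_erase.mpr ⟨(Finset.mem_erase.mp hρ).1, Finset.mem_univ ρ⟩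
  have hRHS : tensorForm F (x + ∑ r, μ r • castVec (g r)) - tensorForm F x =
      ∑ ρ ∈ Finset.univ.erase cnone, T ρ := by
    rw [ha, hb, ← Finset.add_sum_erase _ T (Finset.mem_univ cnone)]
    ring
  rw [hRHS, hLHS, hsumB]
  apply Finset.sum_le_sum_of_subset_of_nonneg hsub
  intro ρ hρ hρB
  have hρne : ρ ≠ cnone := (Finset.mem_erase.mp hρ).1
  obtain ⟨p₁, hp₁⟩ := Function.ne_iff.mp hρne
  obtain ⟨r₁, hr₁⟩ := Option.ne_none_iff_exists'.mp hp₁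
  have hρD : ρ ∉ D r₁ := by
    intro h
    exact hρB (Finset.mem_biUnion.mpr ⟨r₁, Finset.mem_univ _, h⟩)
  have : ρ ∉ As r₁ := by
    intro h
    exact hρD (Finset.mem_erase.mpr ⟨hρne, h⟩)
  rw [hAs, Finset.mem_filter] at this
  push_neg at this
  obtain ⟨p₂, hp₂, hp₂'⟩ := this (Finset.mem_univ ρ)
  obtain ⟨r₂, hr₂⟩ := Option.ne_none_iff_exists'.mp hp₂
  have hrne : r₁ ≠ r₂ := by
    intro h
    rw [← h] at hr₂
    exact hp₂' hr₂
  exact Tterm_nonneg A F hF x hx g hg hdist horth μ hμ ρ p₁ p₂ r₁ r₂ hr₁ hr₂ hrne
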